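/- In BS(1,p) with p ≥ 2, no geodesic word contains a subword of the form NPNP or PNPN, where a P-block is a nonempty word containing at least one t and no t⁻¹, and an N-block contains at least one t⁻¹ and no t. That is, if a word w contains four consecutive subwords alternating between types N and P (in either order), then there exists a strictly shorter word representing the same element of BS(1,p). -/

import Mathlib

/-- The single defining relation of `BS(1,p)`: `t a t⁻¹ a^{-p}`. -/
def BSrel (p : ℕ) : Set (FreeGroup Bool) :=
  {FreeGroup.of true * FreeGroup.of false * (FreeGroup.of true)⁻¹ * (FreeGroup.of false ^ p)⁻¹}

/-- The solvable Baumslag–Solitar group `BS(1,p) = ⟨a, t | t a t⁻¹ = aᵖ⟩`. -/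
abbrev BS (p : ℕ) : Type := PresentedGroup (BSrel p)

/-- The generator `a` of `BS(1,p)`. -/
def gena (p : ℕ) : BS p := PresentedGroup.of false

/-- The generator `t` of `BS(1,p)`. -/
def gent (p : ℕ) : BS p := PresentedGroup.of true

/-- A letter over the alphabet `{a, a⁻¹, t, t⁻¹}`: first component `false` = `a`,
`true` = `t`; second component is the sign (`true` = positive). -/
abbrev Letter : Type := Bool × Bool

/-- Value of a letter in `BS(1,p)`. -/
def letterVal (p : ℕ) : Letter → BS p
  | (g, s) => (if g then gent p else gena p) ^ (if s then (1 : ℤ) else -1)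

/-- The element of `BS(1,p)` represented by a word. -/
def wordVal (p : ℕ) (w : List Letter) : BS p := (w.map (letterVal p)).prod

def tP : Letter := (true, true)
def tN : Letter := (true, false)
def aP : Letter := (false, true)
def aN : Letter := (false, false)

/-- `t`-exponent sum of a word. -/
def texp (w : List Letter) : ℤ := (w.count tP : ℤ) - (w.count tN : ℤ)

/-- A word of type `P`: contains at least one `t` and no `t⁻¹`. -/
def TypeP (w : List Letter) : Prop := tP ∈ w ∧ tN ∉ w

/-- A word of type `N`: contains at least one `t⁻¹` and no `t`. -/
def TypeN (w : List Letter) : Prop := tN ∈ w ∧ tP ∉ w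

/-- The word `a^x` (as a string of `|x|` letters). -/
def aWord (x : ℤ) : List Letter := List.replicate x.natAbs (false, decide (0 < x))

/-- The word `a^{ε₀} t a^{ε₁} t ⋯ t a^{ε_q}`. -/
def stackWord (ε : ℕ → ℤ) (q : ℕ) : List Letter :=
  ((List.range q).map (fun i => aWord (ε i) ++ [tP])).flatten ++ aWord (ε q)

/-- The word `t⁻ᵏ a^{ε₀} t ⋯ t a^{ε_q} t⁻ᵐ`. -/
def canonWord (k : ℕ) (ε : ℕ → ℤ) (q m : ℕ) : List Letter :=
  List.replicate k tN ++ stackWord ε q ++ List.replicate m tN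

/-- `ℤ[1/p]` as an additive subgroup of `ℚ`. -/
def Zp (p : ℕ) : AddSubgroup ℚ := AddSubgroup.closure {x : ℚ | ∃ n : ℕ, x = ((p : ℚ))⁻¹ ^ n}

/-! ### Auxiliary algebraic lemmas -/

lemma bs_rel (p : ℕ) : gent p * gena p * (gent p)⁻¹ = gena p ^ p := by
  have h : (QuotientGroup.mk (FreeGroup.of true * FreeGroup.of false * (FreeGroup.of true)⁻¹ *
      (FreeGroup.of false ^ p)⁻¹) : BS p) = 1 := by
    rw [QuotientGroup.eq_one_iff]
    exact Subgroup.subset_normalClosure rfl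
  have h2 : (QuotientGroup.mk' (Subgroup.normalClosure (BSrel p)))
      (FreeGroup.of true * FreeGroup.of false * (FreeGroup.of true)⁻¹ *
      (FreeGroup.of false ^ p)⁻¹) = 1 := h
  simp only [map_mul, map_inv, map_pow] at h2
  exact mul_inv_eq_one.mp h2

/-- conjugates of `a` by powers of `t` -/
def gg (p : ℕ) (n : ℤ) : BS p := gent p ^ n * gena p * gent p ^ (-n)

lemma gg_succ (p : ℕ) (n : ℤ) : gg p (n + 1) = gg p n ^ p := by
  unfold gg
  rw [zpow_neg, zpow_neg, conj_pow, ← bs_rel p]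
  group

lemma gg_add_nat (p : ℕ) (n : ℤ) (k : ℕ) : gg p (n + k) = gg p n ^ (p ^ k) := by
  induction k with
  | zero => simp
  | succ k ih =>
    push_cast
    rw [show n + ((k:ℤ)+1) = (n + k) + 1 from by ring, gg_succ, ih, ← pow_mul, pow_succ]

lemma gg_comm (p : ℕ) (m n : ℤ) : Commute (gg p m) (gg p n) := by
  rcases le_total m n with h | h
  · have : n = m + (n - m).toNat := by omega
    rw [this, gg_add_nat]
    exact (Commute.refl _).pow_right _
  · have : m = n + (m - n).toNat := by omega
    rw [this, gg_add_nat]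
    exact (Commute.refl _).pow_left _

/-- The subgroup generated by all conjugates of `a` by powers of `t`. -/
def ZA (p : ℕ) : Subgroup (BS p) := Subgroup.closure (Set.range (gg p))

lemma ZA_comm (p : ℕ) {x y : BS p} (hx : x ∈ ZA p) (hy : y ∈ ZA p) : Commute x y := by
  refine Subgroup.closure_induction₂ ?_ ?_ ?_ ?_ ?_ ?_ ?_ hx hy
  · rintro _ _ ⟨m, rfl⟩ ⟨n, rfl⟩; exact gg_comm p m n
  · intro x _; exact Commute.one_left x
  · intro x _; exact Commute.one_right x
  · intro x y z _ _ _ h1 h2; exact h1.mul_left h2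
  · intro y z x _ _ _ h1 h2; exact h1.mul_right h2
  · intro x y _ _ h; exact h.inv_left
  · intro x y _ _ h; exact h.inv_right

lemma ZA_conj (p : ℕ) {x : BS p} (hx : x ∈ ZA p) (s : ℤ) :
    gent p ^ s * x * gent p ^ (-s) ∈ ZA p := by
  induction hx using Subgroup.closure_induction with
  | mem x h =>
    obtain ⟨n, rfl⟩ := h
    apply Subgroup.subset_closure
    exact ⟨s + n, by unfold gg; group⟩
  | one => simpa using Subgroup.one_mem _
  | mul x y hx hy h1 h2 =>
    have : gent p ^ s * (x * y) * gent p ^ (-s)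
        = (gent p ^ s * x * gent p ^ (-s)) * (gent p ^ s * y * gent p ^ (-s)) := by group
    rw [this]; exact Subgroup.mul_mem _ h1 h2
  | inv x hx h =>
    have : gent p ^ s * x⁻¹ * gent p ^ (-s) = (gent p ^ s * x * gent p ^ (-s))⁻¹ := by group
    rw [this]; exact Subgroup.inv_mem _ h

lemma ZA_conj_neg (p : ℕ) {x : BS p} (hx : x ∈ ZA p) :
    (gent p)⁻¹ * x * gent p ∈ ZA p := by
  have := ZA_conj p hx (-1)
  simpa using this

lemma ZA_conj_pos (p : ℕ) {x : BS p} (hx : x ∈ ZA p) :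
    gent p * x * (gent p)⁻¹ ∈ ZA p := by
  have := ZA_conj p hx 1
  simpa using this

lemma wordVal_append (p : ℕ) (u v : List Letter) :
    wordVal p (u ++ v) = wordVal p u * wordVal p v := by
  simp [wordVal]

lemma texp_append (u v : List Letter) : texp (u ++ v) = texp u + texp v := by
  simp [texp, List.count_append]; ring

lemma wordVal_texp (p : ℕ) (u : List Letter) :
    ∃ z ∈ ZA p, wordVal p u = z * gent p ^ (texp u) := by
  induction u with
  | nil => exact ⟨1, Subgroup.one_mem _, by simp [wordVal, texp]⟩
  | cons l u ih =>
    obtain ⟨z, hz, hval⟩ := ih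
    have hcons : wordVal p (l :: u) = letterVal p l * wordVal p u := by simp [wordVal]
    obtain ⟨b, s⟩ := l
    have hga : gena p ∈ ZA p := by
      apply Subgroup.subset_closure; exact ⟨0, by unfold gg; group⟩
    cases b
    · -- a letter
      have ht : texp ((false, s) :: u) = texp u := by
        simp [texp, List.count_cons, tP, tN]
      refine ⟨gena p ^ (if s then (1:ℤ) else -1) * z, ?_, ?_⟩
      · exact Subgroup.mul_mem _ (Subgroup.zpow_mem _ hga _) hz
      · rw [hcons, hval, ht, letterVal, mul_assoc]; norm_num
    · -- t letter
      set e : ℤ := if s then (1:ℤ) else -1 with he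
      have ht : texp ((true, s) :: u) = e + texp u := by
        cases s <;> simp [texp, List.count_cons, tP, tN, he] <;> ring
      refine ⟨gent p ^ e * z * gent p ^ (-e), ZA_conj p hz e, ?_⟩
      rw [hcons, hval, ht, letterVal, zpow_add]
      simp only [if_true, he]; group

lemma balanced_mem (p : ℕ) (u : List Letter) (h : texp u = 0) : wordVal p u ∈ ZA p := by
  obtain ⟨z, hz, hv⟩ := wordVal_texp p u
  rw [hv, h]
  simpa using hz

lemma keyN {G : Type*} [Group G] (t ε ω A C : G) (h : Commute (t⁻¹ * ε * t) ω) :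
    A * t⁻¹ * ε * t * ω * t⁻¹ * C = A * ω * t⁻¹ * ε * C := by
  calc A * t⁻¹ * ε * t * ω * t⁻¹ * C = A * ((t⁻¹ * ε * t) * ω) * (t⁻¹ * C) := by group
    _ = A * (ω * (t⁻¹ * ε * t)) * (t⁻¹ * C) := by rw [h.eq]
    _ = A * ω * t⁻¹ * ε * C := by group

lemma keyP {G : Type*} [Group G] (t ε ω A C : G) (h : Commute (t * ε * t⁻¹) ω) :
    A * t * ε * t⁻¹ * ω * t * C = A * ω * t * ε * C := by
  calc A * t * ε * t⁻¹ * ω * t * C = A * ((t * ε * t⁻¹) * ω) * (t * C) := by group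
    _ = A * (ω * (t * ε * t⁻¹)) * (t * C) := by rw [h.eq]
    _ = A * ω * t * ε * C := by group

lemma wordVal_tN (p : ℕ) : wordVal p [tN] = (gent p)⁻¹ := by
  show (letterVal p (true, false)) * 1 = (gent p)⁻¹
  rw [letterVal]
  norm_num

lemma wordVal_tP (p : ℕ) : wordVal p [tP] = gent p := by
  show (letterVal p (true, true)) * 1 = gent p
  rw [letterVal]
  norm_num

/-- The main shortening move, `N` shape: `t⁻¹ E t W t⁻¹ → W t⁻¹ E` for balanced `E`, `W`. -/
lemma shortenN (p : ℕ) (α E W γ : List Letter) (hE : texp E = 0) (hW : texp W = 0) :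
    ∃ w' : List Letter,
      wordVal p w' = wordVal p (α ++ [tN] ++ E ++ [tP] ++ W ++ [tN] ++ γ) ∧
      w'.length + 2 = (α ++ [tN] ++ E ++ [tP] ++ W ++ [tN] ++ γ).length := by
  refine ⟨α ++ W ++ [tN] ++ E ++ γ, ?_, ?_⟩
  · have hε := balanced_mem p E hE
    have hω := balanced_mem p W hW
    have hcomm : Commute ((gent p)⁻¹ * wordVal p E * gent p) (wordVal p W) :=
      ZA_comm p (ZA_conj_neg p hε) hω
    simp only [wordVal_append, wordVal_tN, wordVal_tP]
    exact (keyN _ _ _ _ _ hcomm).symm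
  · simp only [List.length_append, List.length_singleton]
    omega

/-- The main shortening move, `P` shape: `t E t⁻¹ W t → W t E` for balanced `E`, `W`. -/
lemma shortenP (p : ℕ) (α E W γ : List Letter) (hE : texp E = 0) (hW : texp W = 0) :
    ∃ w' : List Letter,
      wordVal p w' = wordVal p (α ++ [tP] ++ E ++ [tN] ++ W ++ [tP] ++ γ) ∧
      w'.length + 2 = (α ++ [tP] ++ E ++ [tN] ++ W ++ [tP] ++ γ).length := by
  refine ⟨α ++ W ++ [tP] ++ E ++ γ, ?_, ?_⟩
  · have hε := balanced_mem p E hE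
    have hω := balanced_mem p W hW
    have hcomm : Commute (gent p * wordVal p E * (gent p)⁻¹) (wordVal p W) :=
      ZA_comm p (ZA_conj_pos p hε) hω
    simp only [wordVal_append, wordVal_tN, wordVal_tP]
    exact (keyP _ _ _ _ _ hcomm).symm
  · simp only [List.length_append, List.length_singleton]
    omega

lemma split_count {α : Type*} [BEq α] [LawfulBEq α] (a : α) (l : List α) (n : ℕ)
    (h : n < l.count a) : ∃ s t, l = s ++ a :: t ∧ s.count a = n := by
  induction l generalizing n with
  | nil => simp at h
  | cons b l ih =>
    by_cases hb : b = a
    · subst hb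
      cases n with
      | zero => exact ⟨[], l, rfl, by simp⟩
      | succ n =>
        have h' : n < l.count b := by
          rw [List.count_cons_self] at h; omega
        obtain ⟨s, t, hst, hs⟩ := ih _ h'
        refine ⟨b :: s, t, by rw [hst]; simp, ?_⟩
        rw [List.count_cons_self, hs]
    · have h' : n < l.count a := by
        rwa [List.count_cons_of_ne hb] at h
      obtain ⟨s, t, hst, hs⟩ := ih _ h'
      exact ⟨b :: s, t, by rw [hst]; simp,
        by rw [List.count_cons_of_ne hb, hs]⟩

lemma count_split_self (c : Letter) {x s t : List Letter} (e : x = s ++ c :: t) :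
    x.count c = s.count c + t.count c + 1 := by
  subst e; rw [List.count_append, List.count_cons_self]; omega

lemma count_split_ne {c d : Letter} (h : d ≠ c) {x s t : List Letter}
    (e : x = s ++ c :: t) : x.count d = s.count d + t.count d := by
  subst e; rw [List.count_append, List.count_cons_of_ne h.symm]

/-- a word containing four consecutive blocks alternating between types
`N` and `P` (in either order) is not geodesic: some strictly shorter word represents
the same element. -/
theorem stmt4 (p : ℕ) (hp : 2 ≤ p) (w w₀ x₁ x₂ x₃ x₄ w₅ : List Letter)
    (hw : w = w₀ ++ x₁ ++ x₂ ++ x₃ ++ x₄ ++ w₅)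
    (halt : (TypeN x₁ ∧ TypeP x₂ ∧ TypeN x₃ ∧ TypeP x₄) ∨
            (TypeP x₁ ∧ TypeN x₂ ∧ TypeP x₃ ∧ TypeN x₄)) :
    ∃ w' : List Letter, wordVal p w' = wordVal p w ∧ w'.length < w.length := by
  rcases halt with ⟨h1, h2, h3, h4⟩ | ⟨h1, h2, h3, h4⟩
  · -- NPNP case
    have hc1N : 0 < x₁.count tN := List.count_pos_iff.mpr h1.1
    have hc1P : x₁.count tP = 0 := List.count_eq_zero.mpr h1.2
    have hc2P : 0 < x₂.count tP := List.count_pos_iff.mpr h2.1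
    have hc2N : x₂.count tN = 0 := List.count_eq_zero.mpr h2.2
    have hc3N : 0 < x₃.count tN := List.count_pos_iff.mpr h3.1
    have hc3P : x₃.count tP = 0 := List.count_eq_zero.mpr h3.2
    have hc4P : 0 < x₄.count tP := List.count_pos_iff.mpr h4.1
    have hc4N : x₄.count tN = 0 := List.count_eq_zero.mpr h4.2
    rcases le_or_gt (x₂.count tP) (x₃.count tN) with hkj | hkj
    · -- k ≤ j : use pattern (tN, tP, tN)
      obtain ⟨p₁, q₁, e1, f1⟩ := split_count tN x₁ (x₁.count tN - 1) (by omega)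
      obtain ⟨p₂, q₂, e2, f2⟩ := split_count tP x₂ 0 (by omega)
      obtain ⟨p₃, q₃, e3, f3⟩ := split_count tN x₃ (x₂.count tP - 1) (by omega)
      have s1 := count_split_self tN e1
      have n1 := count_split_ne (show tP ≠ tN by decide) e1
      have s2 := count_split_self tP e2
      have n2 := count_split_ne (show tN ≠ tP by decide) e2
      have s3 := count_split_self tN e3
      have n3 := count_split_ne (show tP ≠ tN by decide) e3
      have hE : texp (q₁ ++ p₂) = 0 := by
        simp only [texp, List.count_append]; omega
      have hW : texp (q₂ ++ p₃) = 0 := by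
        simp only [texp, List.count_append]; omega
      have hw' : w = (w₀ ++ p₁) ++ [tN] ++ (q₁ ++ p₂) ++ [tP] ++ (q₂ ++ p₃) ++ [tN]
          ++ (q₃ ++ x₄ ++ w₅) := by
        rw [hw, e1, e2, e3]
        simp [List.append_assoc]
      obtain ⟨w', hval, hlen⟩ := shortenN p (w₀ ++ p₁) (q₁ ++ p₂) (q₂ ++ p₃)
        (q₃ ++ x₄ ++ w₅) hE hW
      rw [← hw'] at hval hlen
      exact ⟨w', hval, by omega⟩
    · -- j < k : use pattern (tP, tN, tP)
      obtain ⟨p₂, q₂, e2, f2⟩ := split_count tP x₂ (x₂.count tP - x₃.count tN) (by omega)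
      obtain ⟨p₃, q₃, e3, f3⟩ := split_count tN x₃ (x₃.count tN - 1) (by omega)
      obtain ⟨p₄, q₄, e4, f4⟩ := split_count tP x₄ 0 (by omega)
      have s2 := count_split_self tP e2
      have n2 := count_split_ne (show tN ≠ tP by decide) e2
      have s3 := count_split_self tN e3
      have n3 := count_split_ne (show tP ≠ tN by decide) e3
      have s4 := count_split_self tP e4
      have n4 := count_split_ne (show tN ≠ tP by decide) e4
      have hE : texp (q₂ ++ p₃) = 0 := by
        simp only [texp, List.count_append]; omega
      have hW : texp (q₃ ++ p₄) = 0 := by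
        simp only [texp, List.count_append]; omega
      have hw' : w = (w₀ ++ x₁ ++ p₂) ++ [tP] ++ (q₂ ++ p₃) ++ [tN] ++ (q₃ ++ p₄) ++ [tP]
          ++ (q₄ ++ w₅) := by
        rw [hw, e2, e3, e4]
        simp [List.append_assoc]
      obtain ⟨w', hval, hlen⟩ := shortenP p (w₀ ++ x₁ ++ p₂) (q₂ ++ p₃) (q₃ ++ p₄)
        (q₄ ++ w₅) hE hW
      rw [← hw'] at hval hlen
      exact ⟨w', hval, by omega⟩
  · -- PNPN case
    have hc1P : 0 < x₁.count tP := List.count_pos_iff.mpr h1.1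
    have hc1N : x₁.count tN = 0 := List.count_eq_zero.mpr h1.2
    have hc2N : 0 < x₂.count tN := List.count_pos_iff.mpr h2.1
    have hc2P : x₂.count tP = 0 := List.count_eq_zero.mpr h2.2
    have hc3P : 0 < x₃.count tP := List.count_pos_iff.mpr h3.1
    have hc3N : x₃.count tN = 0 := List.count_eq_zero.mpr h3.2
    have hc4N : 0 < x₄.count tN := List.count_pos_iff.mpr h4.1
    have hc4P : x₄.count tP = 0 := List.count_eq_zero.mpr h4.2
    rcases le_or_gt (x₂.count tN) (x₃.count tP) with hjk | hjk
    · -- j ≤ k : use pattern (tP, tN, tP)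
      obtain ⟨p₁, q₁, e1, f1⟩ := split_count tP x₁ (x₁.count tP - 1) (by omega)
      obtain ⟨p₂, q₂, e2, f2⟩ := split_count tN x₂ 0 (by omega)
      obtain ⟨p₃, q₃, e3, f3⟩ := split_count tP x₃ (x₂.count tN - 1) (by omega)
      have s1 := count_split_self tP e1
      have n1 := count_split_ne (show tN ≠ tP by decide) e1
      have s2 := count_split_self tN e2
      have n2 := count_split_ne (show tP ≠ tN by decide) e2
      have s3 := count_split_self tP e3
      have n3 := count_split_ne (show tN ≠ tP by decide) e3
      have hE : texp (q₁ ++ p₂) = 0 := by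
        simp only [texp, List.count_append]; omega
      have hW : texp (q₂ ++ p₃) = 0 := by
        simp only [texp, List.count_append]; omega
      have hw' : w = (w₀ ++ p₁) ++ [tP] ++ (q₁ ++ p₂) ++ [tN] ++ (q₂ ++ p₃) ++ [tP]
          ++ (q₃ ++ x₄ ++ w₅) := by
        rw [hw, e1, e2, e3]
        simp [List.append_assoc]
      obtain ⟨w', hval, hlen⟩ := shortenP p (w₀ ++ p₁) (q₁ ++ p₂) (q₂ ++ p₃)
        (q₃ ++ x₄ ++ w₅) hE hW
      rw [← hw'] at hval hlen
      exact ⟨w', hval, by omega⟩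
    · -- k < j : use pattern (tN, tP, tN)
      obtain ⟨p₂, q₂, e2, f2⟩ := split_count tN x₂ (x₂.count tN - x₃.count tP) (by omega)
      obtain ⟨p₃, q₃, e3, f3⟩ := split_count tP x₃ (x₃.count tP - 1) (by omega)
      obtain ⟨p₄, q₄, e4, f4⟩ := split_count tN x₄ 0 (by omega)
      have s2 := count_split_self tN e2
      have n2 := count_split_ne (show tP ≠ tN by decide) e2
      have s3 := count_split_self tP e3
      have n3 := count_split_ne (show tN ≠ tP by decide) e3
      have s4 := count_split_self tN e4
      have n4 := count_split_ne (show tP ≠ tN by decide) e4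
      have hE : texp (q₂ ++ p₃) = 0 := by
        simp only [texp, List.count_append]; omega
      have hW : texp (q₃ ++ p₄) = 0 := by
        simp only [texp, List.count_append]; omega
      have hw' : w = (w₀ ++ x₁ ++ p₂) ++ [tN] ++ (q₂ ++ p₃) ++ [tP] ++ (q₃ ++ p₄) ++ [tN]
          ++ (q₄ ++ w₅) := by
        rw [hw, e2, e3, e4]
        simp [List.append_assoc]
      obtain ⟨w', hval, hlen⟩ := shortenN p (w₀ ++ x₁ ++ p₂) (q₂ ++ p₃) (q₃ ++ p₄)
        (q₄ ++ w₅) hE hW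
      rw [← hw'] at hval hlen
      exact ⟨w', hval, by omega⟩
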